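/- Fix g ∈ ℝ. Let Q and B be n×n real matrices with B diagonal, satisfying Q + Qᵀ = B and Q·𝟙 = 0 (𝟙 the all-ones vector). Let h, u ∈ ℝⁿ with h_i > 0 for all i, representing 1D shallow water states u_i = (h_i, h_i u_i). Let v_i = ( g h_i − (1/2)u_i², u_i ) be the entropy variables, ψ_i = (1/2) g h_i² u_i the entropy potentials, f_i = ( h_i u_i, h_i u_i² + (1/2)g h_i² ) the physical fluxes, and F_{ij} = f_S^x(u_i, u_j) = ( ⟨hu⟩_{ij}, ⟨hu⟩_{ij}⟨u⟩_{ij} + g⟨h⟩_{ij}² − (1/2)g⟨h²⟩_{ij} ) the entropy conservative flux, where ⟨a⟩_{ij} = (a_i + a_j)/2. Then the flux-differencing entropy identity holds: Σ_{i=1}^{n} Σ_{j=1}^{n} 2 Q_{ij} (v_i)ᵀ F_{ij} = Σ_{i=1}^{n} B_{ii} ( (v_i)ᵀ f_i − ψ_i ). -/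

import Mathlib

open Matrix Finset

/-- the flux-differencing entropy identity for 1D shallow water with
zero bathymetry. If `Q + Qᵀ = B` with `B` diagonal and `Q 𝟙 = 0`, states
`u_i = (h_i, h_i u_i)` with `h_i > 0`, entropy variables
`v_i = (g h_i − (1/2)u_i², u_i)`, entropy potentials `ψ_i = (1/2) g h_i² u_i`,
physical fluxes `f_i = (h_i u_i, h_i u_i² + (1/2) g h_i²)`, and entropy
conservative fluxes `F_{ij} = (⟨hu⟩, ⟨hu⟩⟨u⟩ + g⟨h⟩² − (1/2)g⟨h²⟩)`, then
`Σ_i Σ_j 2 Q_{ij} v_iᵀ F_{ij} = Σ_i B_{ii} (v_iᵀ f_i − ψ_i)`. -/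
theorem flux_differencing_entropy_identity
    {n : ℕ} (g : ℝ)
    (Q B : Matrix (Fin n) (Fin n) ℝ)
    (hBdiag : B.IsDiag)
    (hSBP : Q + Qᵀ = B)
    (hQ1 : Q *ᵥ (fun _ => (1 : ℝ)) = 0)
    (h u : Fin n → ℝ)
    (hpos : ∀ i, 0 < h i) :
    ∑ i : Fin n, ∑ j : Fin n,
        2 * Q i j *
          ((g * h i - (1/2) * (u i) ^ 2) * ((h i * u i + h j * u j) / 2)
            + u i * ((h i * u i + h j * u j) / 2 * ((u i + u j) / 2)
                + g * ((h i + h j) / 2) ^ 2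
                - (1/2) * g * ((h i ^ 2 + h j ^ 2) / 2)))
      = ∑ i : Fin n,
          B i i *
            ((g * h i - (1/2) * (u i) ^ 2) * (h i * u i)
              + u i * (h i * (u i) ^ 2 + (1/2) * g * (h i) ^ 2)
              - (1/2) * g * (h i) ^ 2 * u i) := by
  -- abbreviations
  set G : Fin n → Fin n → ℝ := fun i j =>
    ((g * h i - (1/2) * (u i) ^ 2) * ((h i * u i + h j * u j) / 2)
      + u i * ((h i * u i + h j * u j) / 2 * ((u i + u j) / 2)
          + g * ((h i + h j) / 2) ^ 2
          - (1/2) * g * ((h i ^ 2 + h j ^ 2) / 2))) with hGdef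
  set ψ : Fin n → ℝ := fun i => (1/2) * g * (h i) ^ 2 * u i with hψdef
  -- row sums of Q vanish
  have hrow : ∀ i, ∑ j, Q i j = 0 := by
    intro i
    have := congrFun hQ1 i
    simpa [Matrix.mulVec, dotProduct] using this
  -- SBP pointwise
  have hBQ : ∀ i j, Q i j + Q j i = B i j := by
    intro i j
    have := congrFun (congrFun hSBP i) j
    simpa [Matrix.transpose_apply] using this
  -- column sums of Q give the boundary matrix
  have hcol : ∀ j, ∑ i, Q i j = B j j := by
    intro j
    have h1 : ∑ i, Q i j = ∑ i, (B i j - Q j i) := by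
      refine Finset.sum_congr rfl fun i _ => ?_
      have h1 := hBQ i j
      linarith
    rw [h1, Finset.sum_sub_distrib, hrow j, sub_zero]
    rw [Finset.sum_eq_single j (fun i _ hij => hBdiag (by simpa using hij)) (by simp)]
  -- Tadmor shuffle condition
  have hTadmor : ∀ i j, G i j - G j i = ψ i - ψ j := by
    intro i j
    simp only [hGdef, hψdef]
    ring
  -- split the summand
  have hsplit : ∀ i j, 2 * Q i j * G i j
      = Q i j * (G i j - G j i) + Q i j * (G i j + G j i) := by
    intro i j; ring
  calc
    ∑ i, ∑ j, 2 * Q i j * G i j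
        = ∑ i, ∑ j, (Q i j * (ψ i - ψ j) + Q i j * (G i j + G j i)) := by
          refine Finset.sum_congr rfl fun i _ => Finset.sum_congr rfl fun j _ => ?_
          rw [hsplit, hTadmor]
    _ = (∑ i, ∑ j, Q i j * (ψ i - ψ j)) + ∑ i, ∑ j, Q i j * (G i j + G j i) := by
          rw [← Finset.sum_add_distrib]
          exact Finset.sum_congr rfl fun i _ => Finset.sum_add_distrib
    _ = (- ∑ i, B i i * ψ i) + ∑ i, B i i * G i i := by
          congr 1
          · -- antisymmetric part
            have : ∑ i, ∑ j, Q i j * (ψ i - ψ j)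
                = ∑ i, ∑ j, (Q i j * ψ i - Q i j * ψ j) := by
              refine Finset.sum_congr rfl fun i _ => Finset.sum_congr rfl fun j _ => ?_
              ring
            rw [this]
            have h2 : ∑ i, ∑ j, (Q i j * ψ i - Q i j * ψ j)
                = (∑ i, ∑ j, Q i j * ψ i) - ∑ i, ∑ j, Q i j * ψ j := by
              rw [← Finset.sum_sub_distrib]
              exact Finset.sum_congr rfl fun i _ => Finset.sum_sub_distrib _ _
            rw [h2]
            have h3 : ∑ i, ∑ j, Q i j * ψ i = 0 := by
              refine Finset.sum_eq_zero fun i _ => ?_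
              rw [← Finset.sum_mul, hrow i, zero_mul]
            have h4 : ∑ i : Fin n, ∑ j, Q i j * ψ j = ∑ j, B j j * ψ j := by
              rw [Finset.sum_comm]
              refine Finset.sum_congr rfl fun j _ => ?_
              rw [← Finset.sum_mul, hcol j]
            rw [h3, h4, zero_sub]
          · -- symmetric part
            have hswap : ∑ i, ∑ j, Q i j * (G i j + G j i)
                = ∑ i, ∑ j, Q j i * (G i j + G j i) := by
              rw [Finset.sum_comm]
              refine Finset.sum_congr rfl fun i _ => Finset.sum_congr rfl fun j _ => ?_
              ring_nf
            have h2S : (2 : ℝ) * ∑ i, ∑ j, Q i j * (G i j + G j i)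
                = ∑ i, ∑ j, B i j * (G i j + G j i) := by
              rw [two_mul]
              nth_rewrite 2 [hswap]
              rw [← Finset.sum_add_distrib]
              refine Finset.sum_congr rfl fun i _ => ?_
              rw [← Finset.sum_add_distrib]
              refine Finset.sum_congr rfl fun j _ => ?_
              rw [← hBQ i j]; ring
            have hBsum : ∑ i, ∑ j, B i j * (G i j + G j i)
                = ∑ i, 2 * (B i i * G i i) := by
              refine Finset.sum_congr rfl fun i _ => ?_
              rw [Finset.sum_eq_single i (fun j _ hij => by
                rw [hBdiag (Ne.symm (by simpa using hij)), zero_mul]) (by simp)]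
              ring
            have : (2:ℝ) * ∑ i, ∑ j, Q i j * (G i j + G j i)
                = 2 * ∑ i, B i i * G i i := by
              rw [h2S, hBsum, Finset.mul_sum]
            linarith
    _ = ∑ i, B i i * (G i i - ψ i) := by
          rw [← Finset.sum_neg_distrib, ← Finset.sum_add_distrib]
          refine Finset.sum_congr rfl fun i _ => ?_
          ring
    _ = ∑ i, B i i *
            ((g * h i - (1/2) * (u i) ^ 2) * (h i * u i)
              + u i * (h i * (u i) ^ 2 + (1/2) * g * (h i) ^ 2)
              - (1/2) * g * (h i) ^ 2 * u i) := by
          refine Finset.sum_congr rfl fun i _ => ?_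
          simp only [hGdef, hψdef]
          ring
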